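/- arXiv:2602.17289 — 3 statements merged into one kernel-verified Lean document; each statement's English description precedes it below -/
import Mathlib

section
/- Let a, b ≥ 0 with a + b > 0, and let X and Y be independent ℕ-valued random variables with X distributed as Poisson(a) and Y distributed as Poisson(b). Then E[ (X/(X+Y)) · 1_{X+Y ≥ 1} ] = (a/(a+b)) · (1 − e^{−(a+b)}). -/
open MeasureTheory ProbabilityTheory Real




lemma antidiag_sum (a b : ℝ) (s : ℕ) :
    ∑ p ∈ Finset.HasAntidiagonal.antidiagonal s,
      a ^ p.1 * b ^ p.2 / ((p.1.factorial : ℝ) * (p.2.factorial : ℝ))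
      = (a + b) ^ s / (s.factorial : ℝ) := by
  rw [Finset.Nat.sum_antidiagonal_eq_sum_range_succ_mk, add_pow, Finset.sum_div]
  refine Finset.sum_congr rfl fun i hi => ?_
  have hile : i ≤ s := Nat.lt_succ_iff.mp (Finset.mem_range.mp hi)
  have hch : ((s.choose i : ℕ) : ℝ) * (i.factorial : ℝ) * ((s - i).factorial : ℝ)
      = (s.factorial : ℝ) := by
    exact_mod_cast congrArg Nat.cast (Nat.choose_mul_factorial_mul_factorial hile)
  have h1 : (0:ℝ) < (i.factorial : ℝ) := by exact_mod_cast i.factorial_pos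
  have h2 : (0:ℝ) < ((s - i).factorial : ℝ) := by exact_mod_cast (s - i).factorial_pos
  have h3 : (0:ℝ) < (s.factorial : ℝ) := by exact_mod_cast s.factorial_pos
  rw [div_eq_div_iff (by positivity) h3.ne']
  rw [← hch]; ring

lemma aux_sum_exp {c : ℝ} (hc : 0 < c) :
    ∑' s : ℕ, c ^ s / ((s.factorial : ℝ) * (s + 1)) = (Real.exp c - 1) / c := by
  have hc0 : 0 ≤ c := hc.le
  have hfe : ∀ s : ℕ, c ^ s / ((s.factorial : ℝ) * (s + 1)) = c ^ s / (((s+1).factorial : ℝ)) := by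
    intro s
    rw [Nat.factorial_succ]
    push_cast
    ring_nf
  have hsum0 := Real.summable_pow_div_factorial c
  have hsum1 : Summable (fun s : ℕ => c ^ s / (((s+1).factorial : ℝ))) := by
    refine Summable.of_nonneg_of_le (fun s => by positivity) (fun s => ?_) hsum0
    gcongr
    exact Nat.le_succ s
  have hexp : Real.exp c = ∑' s : ℕ, c ^ s / (s.factorial : ℝ) := by
    rw [Real.exp_eq_exp_ℝ, NormedSpace.exp_eq_tsum_div]
  have hshift := hsum0.tsum_eq_zero_add
  simp only [pow_zero, Nat.factorial_zero, Nat.cast_one, div_one] at hshift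
  have hmul : c * ∑' s : ℕ, c ^ s / (((s+1).factorial : ℝ)) = Real.exp c - 1 := by
    rw [← tsum_mul_left]
    have h2 : ∀ s : ℕ, c * (c ^ s / (((s+1).factorial : ℝ))) = c ^ (s+1) / (((s+1).factorial : ℝ)) := by
      intro s; rw [pow_succ]; ring
    rw [tsum_congr h2]
    rw [hexp, hshift]; ring
  rw [tsum_congr hfe, eq_div_iff hc.ne']
  linarith [hmul]





/-- If `X ~ Poisson(a)` and `Y ~ Poisson(b)` are independent with `a + b > 0`, then
`E[(X/(X+Y)) · 1_{X+Y ≥ 1}] = (a/(a+b)) · (1 − e^{−(a+b)})`. -/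
theorem poisson_ratio_indicator_expectation
    {Ω : Type*} [MeasurableSpace Ω] (μ : Measure Ω) [IsProbabilityMeasure μ]
    (a b : ℝ) (ha : 0 ≤ a) (hb : 0 ≤ b) (hab : 0 < a + b)
    (X Y : Ω → ℕ) (hX : Measurable X) (hY : Measurable Y)
    (hXY : IndepFun X Y μ)
    (hXd : ∀ k : ℕ, μ {ω | X ω = k} = ENNReal.ofReal (Real.exp (-a) * a ^ k / (k.factorial : ℝ)))
    (hYd : ∀ k : ℕ, μ {ω | Y ω = k} = ENNReal.ofReal (Real.exp (-b) * b ^ k / (k.factorial : ℝ))) :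
    ∫ ω, (if 1 ≤ X ω + Y ω then (X ω : ℝ) / ((X ω : ℝ) + (Y ω : ℝ)) else 0) ∂μ
      = (a / (a + b)) * (1 - Real.exp (-(a + b))) := by
  classical
  set c : ℝ := a + b with hc
  set g : ℕ × ℕ → ℝ := fun p => if 1 ≤ p.1 + p.2 then (p.1 : ℝ) / ((p.1 : ℝ) + (p.2 : ℝ)) else 0
    with hgdef
  have hg_nonneg : ∀ p, 0 ≤ g p := by
    intro p
    simp only [hgdef]
    split
    · positivity
    · exact le_refl 0
  have hgm : Measurable g := measurable_of_countable g
  have hpair : Measurable fun ω => (X ω, Y ω) := hX.prodMk hY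
  have hrw : (∫ ω, (if 1 ≤ X ω + Y ω then (X ω : ℝ) / ((X ω : ℝ) + (Y ω : ℝ)) else 0) ∂μ)
      = ∫ ω, g (X ω, Y ω) ∂μ := rfl
  rw [hrw]
  rw [integral_eq_lintegral_of_nonneg_ae
    (Filter.Eventually.of_forall fun ω => hg_nonneg (X ω, Y ω))
    ((hgm.comp hpair).aestronglyMeasurable)]
  -- move to the pushforward measure on ℕ × ℕ
  set ν : Measure (ℕ × ℕ) := Measure.map (fun ω => (X ω, Y ω)) μ with hν
  have hmapint : ∫⁻ ω, ENNReal.ofReal (g (X ω, Y ω)) ∂μ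
      = ∫⁻ p, ENNReal.ofReal (g p) ∂ν := by
    rw [hν]
    exact (lintegral_map (measurable_of_countable fun p => ENNReal.ofReal (g p)) hpair).symm
  have hνsingle : ∀ p : ℕ × ℕ, ν {p}
      = ENNReal.ofReal (Real.exp (-a) * a ^ p.1 / (p.1.factorial : ℝ))
        * ENNReal.ofReal (Real.exp (-b) * b ^ p.2 / (p.2.factorial : ℝ)) := by
    rintro ⟨m, n⟩
    rw [hν, Measure.map_apply hpair (measurableSet_singleton _)]
    have hpre : (fun ω => (X ω, Y ω)) ⁻¹' {(m, n)} = X ⁻¹' {m} ∩ Y ⁻¹' {n} := by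
      ext ω; simp [Prod.ext_iff]
    rw [hpre, hXY.measure_inter_preimage_eq_mul _ _ (measurableSet_singleton m)
      (measurableSet_singleton n)]
    have h1 : μ (X ⁻¹' {m}) = ENNReal.ofReal (Real.exp (-a) * a ^ m / (m.factorial : ℝ)) := hXd m
    have h2 : μ (Y ⁻¹' {n}) = ENNReal.ofReal (Real.exp (-b) * b ^ n / (n.factorial : ℝ)) := hYd n
    rw [h1, h2]
  rw [hmapint, lintegral_countable' (fun p : ℕ × ℕ => ENNReal.ofReal (g p))]
  set F : ℕ × ℕ → ℝ := fun p =>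
    g p * (Real.exp (-a) * a ^ p.1 / (p.1.factorial : ℝ)
      * (Real.exp (-b) * b ^ p.2 / (p.2.factorial : ℝ))) with hFdef
  have hpa : ∀ m : ℕ, 0 ≤ Real.exp (-a) * a ^ m / (m.factorial : ℝ) := fun m =>
    div_nonneg (mul_nonneg (Real.exp_nonneg _) (pow_nonneg ha m)) (Nat.cast_nonneg _)
  have hpb : ∀ n : ℕ, 0 ≤ Real.exp (-b) * b ^ n / (n.factorial : ℝ) := fun n =>
    div_nonneg (mul_nonneg (Real.exp_nonneg _) (pow_nonneg hb n)) (Nat.cast_nonneg _)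
  have hterm : ∀ p : ℕ × ℕ, ENNReal.ofReal (g p) * ν {p} = ENNReal.ofReal (F p) := by
    intro p
    rw [hνsingle p, ← ENNReal.ofReal_mul (hpa p.1), ← ENNReal.ofReal_mul (hg_nonneg p)]
  rw [tsum_congr hterm]
  -- nonnegativity of the final answer
  have hexpc1 : Real.exp (-c) ≤ 1 := Real.exp_le_one_iff.mpr (by linarith)
  have hfin0 : 0 ≤ a / c * (1 - Real.exp (-c)) :=
    mul_nonneg (div_nonneg ha hab.le) (by linarith)
  -- main sum computation
  set u : ℕ × ℕ → ℝ := fun p =>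
    a ^ p.1 * b ^ p.2 / ((p.1.factorial : ℝ) * (p.2.factorial : ℝ) * ((p.1 : ℝ) + (p.2 : ℝ) + 1))
    with hudef
  have hu_nonneg : ∀ p : ℕ × ℕ, 0 ≤ u p := by
    intro p
    apply div_nonneg (mul_nonneg (pow_nonneg ha _) (pow_nonneg hb _))
    positivity
  have hK0 : (0:ℝ) ≤ a * Real.exp (-c) := mul_nonneg ha (Real.exp_nonneg _)
  have hF0 : ∀ n : ℕ, F (0, n) = 0 := by
    intro n
    simp only [hFdef, hgdef]
    split <;> simp
  have hFs : ∀ m n : ℕ, F (m + 1, n)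
      = (a * Real.exp (-c)) * u (m, n) := by
    intro m n
    have hgval : g (m + 1, n) = ((m : ℝ) + 1) / ((m : ℝ) + 1 + (n : ℝ)) := by
      simp only [hgdef]
      rw [if_pos (by omega)]
      push_cast
      ring_nf
    have hexpc : Real.exp (-c) = Real.exp (-a) * Real.exp (-b) := by
      rw [← Real.exp_add, hc]; ring_nf
    simp only [hFdef, hudef]
    rw [hgval, hexpc]
    have hfac : (((m + 1).factorial : ℕ) : ℝ) = ((m : ℝ) + 1) * (m.factorial : ℝ) := by
      rw [Nat.factorial_succ]; push_cast; ring
    have hm1 : ((m : ℝ) + 1) ≠ 0 := by positivity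
    have hmn : ((m : ℝ) + 1 + (n : ℝ)) ≠ 0 := by positivity
    have hfm : ((m.factorial : ℕ) : ℝ) ≠ 0 := by
      exact_mod_cast m.factorial_pos.ne'
    have hfn : ((n.factorial : ℕ) : ℝ) ≠ 0 := by
      exact_mod_cast n.factorial_pos.ne'
    rw [hfac, pow_succ]
    field_simp
    ring
  have hsummable : Summable (fun s : ℕ => c ^ s / ((s.factorial : ℝ) * ((s : ℝ) + 1))) := by
    refine Summable.of_nonneg_of_le (fun s => ?_) (fun s => ?_) (Real.summable_pow_div_factorial c)
    · exact div_nonneg (pow_nonneg hab.le _) (by positivity)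
    · have h0 : (0:ℝ) ≤ (s:ℝ) := Nat.cast_nonneg s
      have h1 : (1:ℝ) ≤ (s:ℝ) + 1 := by linarith
      have h2 : (0:ℝ) < (s.factorial : ℝ) := by exact_mod_cast s.factorial_pos
      rw [div_le_div_iff₀ (by positivity) h2]
      nlinarith [mul_le_mul_of_nonneg_left h1 (mul_nonneg (pow_nonneg hab.le s) h2.le)]
  have hS : ∑' p : ℕ × ℕ, ENNReal.ofReal (F p)
      = ENNReal.ofReal (a / c * (1 - Real.exp (-c))) := by
    rw [ENNReal.tsum_prod']
    rw [tsum_eq_zero_add' ENNReal.summable]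
    have hzero : ∑' n : ℕ, ENNReal.ofReal (F (0, n)) = 0 := by simp [hF0]
    rw [hzero, zero_add]
    have hstep : ∀ m n : ℕ, ENNReal.ofReal (F (m + 1, n))
        = ENNReal.ofReal (a * Real.exp (-c)) * ENNReal.ofReal (u (m, n)) := by
      intro m n
      rw [hFs m n, ENNReal.ofReal_mul hK0]
    calc ∑' (m : ℕ) (n : ℕ), ENNReal.ofReal (F (m + 1, n))
        = ∑' (m : ℕ) (n : ℕ), ENNReal.ofReal (a * Real.exp (-c)) * ENNReal.ofReal (u (m, n)) := by
          exact tsum_congr fun m => tsum_congr fun n => hstep m n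
      _ = ENNReal.ofReal (a * Real.exp (-c)) * ∑' (m : ℕ) (n : ℕ), ENNReal.ofReal (u (m, n)) := by
          rw [← ENNReal.tsum_mul_left]
          exact tsum_congr fun m => (ENNReal.tsum_mul_left).symm ▸ rfl
      _ = ENNReal.ofReal (a * Real.exp (-c)) * ∑' p : ℕ × ℕ, ENNReal.ofReal (u p) := by
          congr 1
          exact (ENNReal.tsum_prod' (f := fun p : ℕ × ℕ => ENNReal.ofReal (u p))).symm
      _ = ENNReal.ofReal (a * Real.exp (-c))
            * ∑' s : ℕ, ENNReal.ofReal (c ^ s / ((s.factorial : ℝ) * ((s : ℝ) + 1))) := by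
          congr 1
          rw [← Finset.HasAntidiagonal.sigmaAntidiagonalEquivProd.tsum_eq
            (fun p : ℕ × ℕ => ENNReal.ofReal (u p)), ENNReal.tsum_sigma']
          refine tsum_congr fun s => ?_
          have : ∀ x : {p // p ∈ Finset.HasAntidiagonal.antidiagonal s},
              ENNReal.ofReal (u (Finset.HasAntidiagonal.sigmaAntidiagonalEquivProd ⟨s, x⟩))
                = ENNReal.ofReal (u (x : ℕ × ℕ)) := fun x => rfl
          rw [tsum_congr this]
          rw [(Finset.HasAntidiagonal.antidiagonal s).tsum_subtype (fun p => ENNReal.ofReal (u p))]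
          rw [← ENNReal.ofReal_sum_of_nonneg (fun p _ => hu_nonneg p)]
          congr 1
          have hup : ∀ p ∈ Finset.HasAntidiagonal.antidiagonal s, u p
              = a ^ p.1 * b ^ p.2 / ((p.1.factorial : ℝ) * (p.2.factorial : ℝ))
                * (1 / ((s : ℝ) + 1)) := by
            intro p hp
            have hps : p.1 + p.2 = s := Finset.HasAntidiagonal.mem_antidiagonal.mp hp
            have hcast : (p.1 : ℝ) + (p.2 : ℝ) = (s : ℝ) := by exact_mod_cast congrArg Nat.cast hps
            simp only [hudef]
            rw [hcast]
            rw [div_mul_div_comm, mul_one]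
          rw [Finset.sum_congr rfl hup, ← Finset.sum_mul, antidiag_sum, ← hc]
          rw [div_mul_div_comm, mul_one]
      _ = ENNReal.ofReal (a * Real.exp (-c)) * ENNReal.ofReal ((Real.exp c - 1) / c) := by
          rw [← ENNReal.ofReal_tsum_of_nonneg
            (fun s => div_nonneg (pow_nonneg hab.le _) (by positivity)) hsummable]
          rw [aux_sum_exp hab]
      _ = ENNReal.ofReal (a / c * (1 - Real.exp (-c))) := by
          rw [← ENNReal.ofReal_mul hK0]
          congr 1
          have h1 : Real.exp (-c) * Real.exp c = 1 := by
            rw [← Real.exp_add]; simp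
          have hcne : c ≠ 0 := hab.ne'
          field_simp
          nlinarith [h1]
  rw [hS, ENNReal.toReal_ofReal hfin0]
end

section
/- Let a, b ≥ 0 with a + b > 0, and let X and Y be independent ℕ-valued random variables with X distributed as Poisson(a) and Y distributed as Poisson(b). Then E[ (X/(X+Y)) · 1_{X+Y ≥ 1} ] / P(X+Y ≥ 1) = a/(a+b); that is, the conditional expectation of X/(X+Y) given the event {X+Y ≥ 1} equals a/(a+b). -/
open MeasureTheory ProbabilityTheory Real

lemma aux_binom (x y : ℝ) (m : ℕ) :
    ∑ j ∈ Finset.range (m+1), x ^ j / j.factorial * (y ^ (m-j) / (m-j).factorial)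
      = (x+y) ^ m / m.factorial := by
  rw [add_pow, Finset.sum_div]
  refine Finset.sum_congr rfl fun j hj => ?_
  have hj' : j ≤ m := Nat.lt_succ_iff.mp (Finset.mem_range.mp hj)
  rw [Nat.cast_choose ℝ hj']
  have h1 : (j.factorial : ℝ) ≠ 0 := Nat.cast_ne_zero.mpr j.factorial_ne_zero
  have h2 : ((m-j).factorial : ℝ) ≠ 0 := Nat.cast_ne_zero.mpr (m-j).factorial_ne_zero
  have h3 : (m.factorial : ℝ) ≠ 0 := Nat.cast_ne_zero.mpr m.factorial_ne_zero
  field_simp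

lemma aux_exp (x : ℝ) : Real.exp x = ∑' n : ℕ, x ^ n / n.factorial := by
  rw [Real.exp_eq_exp_ℝ]
  exact congrFun NormedSpace.exp_eq_tsum_div x

lemma aux_weight (x y : ℝ) (m : ℕ) :
    ∑ p ∈ Finset.HasAntidiagonal.antidiagonal (m+1),
        (p.1 : ℝ) * (x ^ p.1 / p.1.factorial * (y ^ p.2 / p.2.factorial))
      = x * ((x+y) ^ m / m.factorial) := by
  rw [Finset.Nat.sum_antidiagonal_eq_sum_range_succ_mk, Finset.sum_range_succ']
  simp only [Nat.cast_zero, zero_mul, add_zero, Nat.sub_zero]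
  have hterm : ∀ i : ℕ, ((i+1 : ℕ) : ℝ) * (x ^ (i+1) / (i+1).factorial
      * (y ^ (m+1-(i+1)) / (m+1-(i+1)).factorial))
      = x * (x ^ i / i.factorial * (y ^ (m-i) / (m-i).factorial)) := by
    intro i
    have h : m + 1 - (i+1) = m - i := by omega
    rw [h, Nat.factorial_succ]
    have h1 : (i.factorial : ℝ) ≠ 0 := Nat.cast_ne_zero.mpr i.factorial_ne_zero
    have h2 : ((i:ℝ) + 1) ≠ 0 := by positivity
    push_cast
    field_simp
    ring
  calc ∑ i ∈ Finset.range (m+1), ((i+1 : ℕ) : ℝ) * (x ^ (i+1) / (i+1).factorial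
        * (y ^ (m+1-(i+1)) / (m+1-(i+1)).factorial))
      = ∑ i ∈ Finset.range (m+1), x * (x ^ i / i.factorial * (y ^ (m-i) / (m-i).factorial)) :=
        Finset.sum_congr rfl fun i _ => hterm i
    _ = x * ((x+y) ^ m / m.factorial) := by rw [← Finset.mul_sum, aux_binom]

lemma tsum_eq_tsum_sum_antidiagonal {F : ℕ × ℕ → ℝ} (h : Summable F) :
    ∑' p : ℕ × ℕ, F p = ∑' n : ℕ, ∑ kl ∈ Finset.HasAntidiagonal.antidiagonal n, F kl := by
  conv_rhs => congr; ext; rw [← Finset.sum_finset_coe, ← tsum_fintype (L := SummationFilter.unconditional _)]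
  rw [← Finset.HasAntidiagonal.sigmaAntidiagonalEquivProd.tsum_eq F]
  exact Summable.tsum_sigma' (fun n => (hasSum_fintype _).summable)
    (Finset.HasAntidiagonal.sigmaAntidiagonalEquivProd.summable_iff.mpr h)

set_option maxHeartbeats 1600000 in
lemma aux_tsum (a b : ℝ) (ha : 0 ≤ a) (hb : 0 ≤ b) (hab : 0 < a + b) :
    ∑' p : ℕ × ℕ, (Real.exp (-a) * a ^ p.1 / p.1.factorial
          * (Real.exp (-b) * b ^ p.2 / p.2.factorial))
        * (if 1 ≤ p.1 + p.2 then (p.1 : ℝ) / ((p.1 : ℝ) + (p.2 : ℝ)) else 0)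
      = a / (a + b) * (1 - Real.exp (-(a+b))) := by
  set t := a + b with ht
  set F : ℕ × ℕ → ℝ := fun p => (Real.exp (-a) * a ^ p.1 / p.1.factorial
          * (Real.exp (-b) * b ^ p.2 / p.2.factorial))
        * (if 1 ≤ p.1 + p.2 then (p.1 : ℝ) / ((p.1 : ℝ) + (p.2 : ℝ)) else 0) with hF
  -- bounds on the "g" factor
  have hg01 : ∀ p : ℕ × ℕ,
      0 ≤ (if 1 ≤ p.1 + p.2 then (p.1 : ℝ) / ((p.1 : ℝ) + (p.2 : ℝ)) else 0) ∧
      (if 1 ≤ p.1 + p.2 then (p.1 : ℝ) / ((p.1 : ℝ) + (p.2 : ℝ)) else 0) ≤ 1 := by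
    rintro ⟨j, k⟩
    by_cases h : 1 ≤ j + k
    · have hd : (0:ℝ) < (j : ℝ) + (k : ℝ) := by
        have : (1:ℝ) ≤ ((j + k : ℕ) : ℝ) := by exact_mod_cast h
        push_cast at this; linarith
      simp only [if_pos h]
      constructor
      · positivity
      · rw [div_le_one hd]; have : (0:ℝ) ≤ (k:ℝ) := by positivity
        linarith
    · simp [h]
  have hw : Summable (fun p : ℕ × ℕ => Real.exp (-a) * a ^ p.1 / p.1.factorial
      * (Real.exp (-b) * b ^ p.2 / p.2.factorial)) := by
    have h1 : Summable (fun j : ℕ => Real.exp (-a) * a ^ j / j.factorial) := by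
      simpa [mul_div_assoc] using (Real.summable_pow_div_factorial a).mul_left (Real.exp (-a))
    have h2 : Summable (fun k : ℕ => Real.exp (-b) * b ^ k / k.factorial) := by
      simpa [mul_div_assoc] using (Real.summable_pow_div_factorial b).mul_left (Real.exp (-b))
    exact h1.mul_of_nonneg h2 (fun j => by positivity) (fun k => by positivity)
  have hFnn : ∀ p, 0 ≤ F p := by
    intro p
    have := (hg01 p).1
    have hwp : 0 ≤ Real.exp (-a) * a ^ p.1 / p.1.factorial
      * (Real.exp (-b) * b ^ p.2 / p.2.factorial) := by positivity
    exact mul_nonneg hwp this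
  have hFle : ∀ p, F p ≤ Real.exp (-a) * a ^ p.1 / p.1.factorial
      * (Real.exp (-b) * b ^ p.2 / p.2.factorial) := by
    intro p
    have hwp : 0 ≤ Real.exp (-a) * a ^ p.1 / p.1.factorial
      * (Real.exp (-b) * b ^ p.2 / p.2.factorial) := by positivity
    calc F p ≤ Real.exp (-a) * a ^ p.1 / p.1.factorial
        * (Real.exp (-b) * b ^ p.2 / p.2.factorial) * 1 :=
          mul_le_mul_of_nonneg_left (hg01 p).2 hwp
      _ = _ := mul_one _
  have hFsum : Summable F := Summable.of_nonneg_of_le hFnn hFle hw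
  set K := a / t * Real.exp (-t) with hK
  have hformula : ∀ n : ℕ, ∑ p ∈ Finset.HasAntidiagonal.antidiagonal n, F p
      = K * (t ^ n / n.factorial) - (if n = 0 then K else 0) := by
    intro n
    match n with
    | 0 => simp [hF]
    | (m+1) =>
      have hcond : ∀ p : ℕ × ℕ, p ∈ Finset.HasAntidiagonal.antidiagonal (m+1) →
          F p = Real.exp (-a) * Real.exp (-b) / (m+1)
            * ((p.1 : ℝ) * (a ^ p.1 / p.1.factorial * (b ^ p.2 / p.2.factorial))) := by
        rintro ⟨j, k⟩ hp
        rw [Finset.HasAntidiagonal.mem_antidiagonal] at hp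
        have h1 : 1 ≤ j + k := by omega
        have h2 : (j : ℝ) + (k : ℝ) = (m : ℝ) + 1 := by
          have h3 : j + k = m + 1 := hp
          have := congrArg (Nat.cast : ℕ → ℝ) h3
          push_cast at this; linarith
        simp only [hF, if_pos h1, h2]
        have hm1 : ((m:ℝ)+1) ≠ 0 := by positivity
        field_simp
      rw [Finset.sum_congr rfl hcond, ← Finset.mul_sum, aux_weight a b m]
      have hm1 : ((m:ℝ)+1) ≠ 0 := by positivity
      have hfac : ((m.factorial : ℝ)) ≠ 0 := Nat.cast_ne_zero.mpr m.factorial_ne_zero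
      have htne : t ≠ 0 := ne_of_gt hab
      have hexp : Real.exp (-a) * Real.exp (-b) = Real.exp (-t) := by
        rw [← Real.exp_add, ht]; ring_nf
      simp only [if_neg (Nat.succ_ne_zero m), sub_zero, hK, hexp, Nat.factorial_succ]
      push_cast
      field_simp
      ring
  -- sum the series
  have hsumf : Summable (fun n : ℕ => K * (t ^ n / n.factorial)) :=
    (Real.summable_pow_div_factorial t).mul_left K
  have hsumg : Summable (fun n : ℕ => if n = 0 then K else 0) :=
    summable_of_ne_finset_zero (s := {0}) (by intro n hn; simp at hn; simp [hn])
  calc ∑' p : ℕ × ℕ, F p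
      = ∑' n : ℕ, ∑ kl ∈ Finset.HasAntidiagonal.antidiagonal n, F kl := tsum_eq_tsum_sum_antidiagonal hFsum
    _ = ∑' n : ℕ, (K * (t ^ n / n.factorial) - (if n = 0 then K else 0)) :=
        tsum_congr hformula
    _ = K * Real.exp t - K := by
        rw [Summable.tsum_sub hsumf hsumg, tsum_mul_left, ← aux_exp, tsum_ite_eq]
    _ = a / t * (1 - Real.exp (-t)) := by
        rw [hK]
        have : Real.exp (-t) * Real.exp t = 1 := by
          rw [← Real.exp_add]; simp
        linear_combination (a / t) * this

lemma aux_g01 (j k : ℕ) :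
    0 ≤ (if 1 ≤ j + k then (j : ℝ) / ((j : ℝ) + (k : ℝ)) else 0) ∧
    (if 1 ≤ j + k then (j : ℝ) / ((j : ℝ) + (k : ℝ)) else 0) ≤ 1 := by
  by_cases h : 1 ≤ j + k
  · have hd : (0:ℝ) < (j : ℝ) + (k : ℝ) := by
      have : (1:ℝ) ≤ ((j + k : ℕ) : ℝ) := by exact_mod_cast h
      push_cast at this; linarith
    simp only [if_pos h]
    refine ⟨by positivity, ?_⟩
    rw [div_le_one hd]
    have : (0:ℝ) ≤ (k:ℝ) := by positivity
    linarith
  · simp [h]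

/-- If `X ~ Poisson(a)` and `Y ~ Poisson(b)` are independent with `a + b > 0`, then the
conditional expectation of `X/(X+Y)` given the event `{X+Y ≥ 1}` equals `a/(a+b)`. -/
theorem poisson_ratio_conditional_expectation
    {Ω : Type*} [MeasurableSpace Ω] (μ : Measure Ω) [IsProbabilityMeasure μ]
    (a b : ℝ) (ha : 0 ≤ a) (hb : 0 ≤ b) (hab : 0 < a + b)
    (X Y : Ω → ℕ) (hX : Measurable X) (hY : Measurable Y)
    (hXY : IndepFun X Y μ)
    (hXd : ∀ k : ℕ, μ {ω | X ω = k} = ENNReal.ofReal (Real.exp (-a) * a ^ k / (k.factorial : ℝ)))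
    (hYd : ∀ k : ℕ, μ {ω | Y ω = k} = ENNReal.ofReal (Real.exp (-b) * b ^ k / (k.factorial : ℝ))) :
    (∫ ω, (if 1 ≤ X ω + Y ω then (X ω : ℝ) / ((X ω : ℝ) + (Y ω : ℝ)) else 0) ∂μ)
        / (μ {ω | 1 ≤ X ω + Y ω}).toReal
      = a / (a + b) := by
  have hZ : Measurable (fun ω => (X ω, Y ω)) := hX.prodMk hY
  set g : ℕ × ℕ → ℝ :=
    fun p => if 1 ≤ p.1 + p.2 then (p.1 : ℝ) / ((p.1 : ℝ) + (p.2 : ℝ)) else 0 with hgdef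
  set m := Measure.map (fun ω => (X ω, Y ω)) μ with hm
  have hmprob : IsProbabilityMeasure m := Measure.isProbabilityMeasure_map hZ.aemeasurable
  -- point masses of the joint law
  have hpoint : ∀ p : ℕ × ℕ, m {p}
      = ENNReal.ofReal (Real.exp (-a) * a ^ p.1 / p.1.factorial
          * (Real.exp (-b) * b ^ p.2 / p.2.factorial)) := by
    rintro ⟨j, k⟩
    rw [hm, Measure.map_apply hZ (measurableSet_singleton _)]
    have hpre : (fun ω => (X ω, Y ω)) ⁻¹' {(j,k)} = X ⁻¹' {j} ∩ Y ⁻¹' {k} := by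
      ext ω; simp [Prod.ext_iff]
    rw [hpre, hXY.measure_inter_preimage_eq_mul _ _ (measurableSet_singleton _)
      (measurableSet_singleton _)]
    have h1 : X ⁻¹' {j} = {ω | X ω = j} := rfl
    have h2 : Y ⁻¹' {k} = {ω | Y ω = k} := rfl
    rw [h1, h2, hXd j, hYd k, ← ENNReal.ofReal_mul (by positivity)]
  -- integrability
  have hgmeas : Measurable g := measurable_of_countable g
  have hgint : Integrable g m := by
    refine ⟨hgmeas.aestronglyMeasurable, ?_⟩
    apply HasFiniteIntegral.of_bounded (C := 1)
    filter_upwards with p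
    rw [Real.norm_eq_abs, abs_le]
    exact ⟨by linarith [(aux_g01 p.1 p.2).1], (aux_g01 p.1 p.2).2⟩
  -- the numerator
  have hnum : (∫ ω, (if 1 ≤ X ω + Y ω then (X ω : ℝ) / ((X ω : ℝ) + (Y ω : ℝ)) else 0) ∂μ)
      = a / (a + b) * (1 - Real.exp (-(a+b))) := by
    have h1 : (∫ ω, (if 1 ≤ X ω + Y ω then (X ω : ℝ) / ((X ω : ℝ) + (Y ω : ℝ)) else 0) ∂μ)
        = ∫ p, g p ∂m := by
      rw [hm, integral_map hZ.aemeasurable hgmeas.aestronglyMeasurable]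
    rw [h1, integral_countable' hgint]
    rw [← aux_tsum a b ha hb hab]
    refine tsum_congr fun p => ?_
    rw [measureReal_def, hpoint p, ENNReal.toReal_ofReal (by positivity), smul_eq_mul]
  -- the denominator
  have hset : {ω | 1 ≤ X ω + Y ω} = ({ω | X ω = 0} ∩ {ω | Y ω = 0})ᶜ := by
    ext ω
    simp only [Set.mem_setOf_eq, Set.mem_compl_iff, Set.mem_inter_iff]
    omega
  have hS : μ ({ω | X ω = 0} ∩ {ω | Y ω = 0}) = ENNReal.ofReal (Real.exp (-(a+b))) := by
    have h1 : ({ω | X ω = 0} ∩ {ω | Y ω = 0}) = X ⁻¹' {0} ∩ Y ⁻¹' {0} := rfl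
    rw [h1, hXY.measure_inter_preimage_eq_mul _ _ (measurableSet_singleton _)
      (measurableSet_singleton _)]
    have h2 : X ⁻¹' ({0} : Set ℕ) = {ω | X ω = 0} := rfl
    have h3 : Y ⁻¹' ({0} : Set ℕ) = {ω | Y ω = 0} := rfl
    rw [h2, h3, hXd 0, hYd 0, ← ENNReal.ofReal_mul (by positivity)]
    congr 1
    simp [← Real.exp_add]
    ring_nf
  have hmeasS : MeasurableSet ({ω | X ω = 0} ∩ {ω | Y ω = 0}) :=
    (hX (measurableSet_singleton 0)).inter (hY (measurableSet_singleton 0))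
  have hden : (μ {ω | 1 ≤ X ω + Y ω}).toReal = 1 - Real.exp (-(a+b)) := by
    rw [hset, measure_compl hmeasS (measure_ne_top _ _), hS, measure_univ,
      ENNReal.toReal_sub_of_le (by
        rw [ENNReal.ofReal_le_one]
        exact Real.exp_le_one_iff.mpr (by linarith)) ENNReal.one_ne_top]
    rw [ENNReal.toReal_one, ENNReal.toReal_ofReal (Real.exp_nonneg _)]
  rw [hnum, hden]
  have hpos : 0 < 1 - Real.exp (-(a+b)) := by
    have : Real.exp (-(a+b)) < 1 := Real.exp_lt_one_iff.mpr (by linarith)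
    linarith
  rw [mul_div_assoc, div_self (ne_of_gt hpos), mul_one]
end

section
/- For all real numbers a, b ≥ 0 with a + b > 0, the double series identity ∑_{n=1}^∞ (1/n) ∑_{k=1}^n k · (a^k / k!) · (b^{n−k} / (n−k)!) = (a/(a+b)) · (e^{a+b} − 1) holds. -/
open Real Finset

lemma binom_sum_div_fact (a b : ℝ) (m : ℕ) :
    ∑ j ∈ Finset.range (m + 1),
      a ^ j / (j.factorial : ℝ) * (b ^ (m - j) / ((m - j).factorial : ℝ))
      = (a + b) ^ m / (m.factorial : ℝ) := by
  rw [add_pow, Finset.sum_div]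
  refine Finset.sum_congr rfl fun j hj => ?_
  have hjm : j ≤ m := Nat.lt_succ_iff.mp (Finset.mem_range.mp hj)
  have hfact : (j.factorial : ℝ) * ((m - j).factorial : ℝ) * (m.choose j : ℝ)
      = (m.factorial : ℝ) := by
    have h := Nat.choose_mul_factorial_mul_factorial hjm
    push_cast [← h]; ring
  have h1 : (j.factorial : ℝ) ≠ 0 := Nat.cast_ne_zero.mpr j.factorial_ne_zero
  have h2 : ((m - j).factorial : ℝ) ≠ 0 := Nat.cast_ne_zero.mpr (m - j).factorial_ne_zero
  field_simp
  rw [← hfact]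
  ring

/-- For `a, b ≥ 0` with `a + b > 0`,
`∑_{n=1}^∞ (1/n) ∑_{k=1}^n k · (a^k/k!) · (b^{n−k}/(n−k)!) = (a/(a+b)) · (e^{a+b} − 1)`.
(The `n = 0` term of the `tsum` below vanishes, since the inner sum is empty.) -/
theorem double_series_binomial_poisson
    (a b : ℝ) (ha : 0 ≤ a) (hb : 0 ≤ b) (hab : 0 < a + b) :
    (∑' n : ℕ, (1 / (n : ℝ)) *
        ∑ k ∈ Finset.Icc 1 n,
          (k : ℝ) * (a ^ k / (k.factorial : ℝ)) * (b ^ (n - k) / ((n - k).factorial : ℝ)))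
      = (a / (a + b)) * (Real.exp (a + b) - 1) := by
  set c : ℝ := a / (a + b) with hc
  have habne : (a + b) ≠ 0 := ne_of_gt hab
  -- the term function
  set f : ℕ → ℝ := fun n => (1 / (n : ℝ)) *
      ∑ k ∈ Finset.Icc 1 n,
        (k : ℝ) * (a ^ k / (k.factorial : ℝ)) * (b ^ (n - k) / ((n - k).factorial : ℝ)) with hf
  have hf0 : f 0 = 0 := by simp [hf]
  have hfs : ∀ m : ℕ, f (m + 1) = c * ((a + b) ^ (m + 1) / ((m + 1).factorial : ℝ)) := by
    intro m
    have hinner : ∑ k ∈ Finset.Icc 1 (m + 1),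
        (k : ℝ) * (a ^ k / (k.factorial : ℝ)) * (b ^ (m + 1 - k) / ((m + 1 - k).factorial : ℝ))
        = a * ((a + b) ^ m / (m.factorial : ℝ)) := by
      rw [← Finset.Ico_add_one_right_eq_Icc, Finset.sum_Ico_eq_sum_range]
      have : m + 1 + 1 - 1 = m + 1 := by omega
      rw [this]
      rw [← binom_sum_div_fact a b m, Finset.mul_sum]
      refine Finset.sum_congr rfl fun j hj => ?_
      have h1 : (1 + j : ℕ) = j + 1 := by omega
      rw [h1]
      have h2 : m + 1 - (j + 1) = m - j := by omega
      rw [h2]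
      have hfj : ((j + 1).factorial : ℝ) = (j + 1 : ℝ) * (j.factorial : ℝ) := by
        rw [Nat.factorial_succ]; push_cast; ring
      have hj1 : (j + 1 : ℝ) ≠ 0 := by positivity
      have hjf : (j.factorial : ℝ) ≠ 0 := Nat.cast_ne_zero.mpr j.factorial_ne_zero
      push_cast
      rw [hfj, pow_succ']
      field_simp
    rw [hf]
    simp only [hinner]
    have hfm1 : ((m + 1).factorial : ℝ) = (m + 1 : ℝ) * (m.factorial : ℝ) := by
      rw [Nat.factorial_succ]; push_cast; ring
    have hm1 : ((m : ℝ) + 1) ≠ 0 := by positivity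
    have hmf : (m.factorial : ℝ) ≠ 0 := Nat.cast_ne_zero.mpr m.factorial_ne_zero
    rw [hc, hfm1]
    push_cast
    rw [pow_succ]
    field_simp
  -- summability
  have hsum : Summable (fun n : ℕ => c * ((a + b) ^ n / (n.factorial : ℝ))) :=
    (Real.summable_pow_div_factorial (a + b)).mul_left c
  have hsumf : Summable f := by
    apply (summable_nat_add_iff 1).mp
    simpa only [hfs] using (summable_nat_add_iff 1).mpr hsum
  have hexp : (∑' n : ℕ, (a + b) ^ n / (n.factorial : ℝ)) = Real.exp (a + b) := by
    rw [Real.exp_eq_exp_ℝ, NormedSpace.exp_eq_tsum_div]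
  calc (∑' n, f n) = f 0 + ∑' m, f (m + 1) := Summable.tsum_eq_zero_add hsumf
    _ = ∑' m, c * ((a + b) ^ (m + 1) / ((m + 1).factorial : ℝ)) := by
        rw [hf0, zero_add]; exact tsum_congr hfs
    _ = c * Real.exp (a + b) - c * 1 := by
        have h0 := Summable.tsum_eq_zero_add hsum
        rw [tsum_mul_left, hexp] at h0
        simp only [pow_zero, Nat.factorial_zero, Nat.cast_one, div_one, mul_one] at h0 ⊢
        linarith
    _ = c * (Real.exp (a + b) - 1) := by ring
end
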